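/- For two entries of a contained sub-matrix that are consecutive in a row-major (or column-major) traversal of that sub-matrix, the absolute difference of their Morton-hybrid linear indices is at least 1 and at most T·(T-1)+1 ≤ T², i.e., bounded by a quantity depending only on T (both entries lie within one T × T row-major block of T² consecutive addresses). -/

import Mathlib

/-- The Morton (Z-order) index of Cartesian coordinates `(i, j)` in a
`2^m × 2^m` matrix: bit interleaving, `Σ_k (2·i_k + j_k)·4^k`. -/
def mortonIndex (m i j : ℕ) : ℕ :=
  ∑ k ∈ Finset.range m, (2 * (i / 2 ^ k % 2) + j / 2 ^ k % 2) * 4 ^ k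

/-- The Morton-hybrid linear address of entry `(i, j)` in a `2^m × 2^m` matrix
with truncation threshold `T = 2^t`: the `T × T` blocks are ordered by the Morton
index of their block coordinates, and each block is stored row-major. -/
def mhAddr (m t i j : ℕ) : ℕ :=
  (2 ^ t) ^ 2 * mortonIndex (m - t) (i / 2 ^ t) (j / 2 ^ t) +
    i % 2 ^ t * 2 ^ t + j % 2 ^ t

lemma blockDivMod {t k x : ℕ} (h1 : k * 2 ^ t ≤ x) (h2 : x < k * 2 ^ t + 2 ^ t) :
    x / 2 ^ t = k ∧ x % 2 ^ t = x - k * 2 ^ t := by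
  have hx : x = k * 2 ^ t + (x - k * 2 ^ t) := (Nat.add_sub_cancel' h1).symm
  have hr : x - k * 2 ^ t < 2 ^ t := (tsub_lt_iff_left h1).2 h2
  refine ⟨Nat.div_eq_of_lt_le h1 (by rw [add_mul, one_mul]; exact h2), ?_⟩
  conv_lhs => rw [hx]
  rw [Nat.mul_add_mod', Nat.mod_eq_of_lt hr]

lemma finalStep (A d P : ℕ) (hP : 0 < P) (hd1 : 1 ≤ d) (hd2 : d ≤ P) :
    1 ≤ max A (A + d) - min A (A + d) ∧
    max A (A + d) - min A (A + d) ≤ P * (P - 1) + 1 ∧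
    P * (P - 1) + 1 ≤ P ^ 2 := by
  rw [max_eq_right (Nat.le_add_right _ _), min_eq_left (Nat.le_add_right _ _),
    Nat.add_sub_cancel_left]
  obtain ⟨Q, rfl⟩ := Nat.exists_eq_add_of_le hP
  have e : 1 + Q - 1 = Q := by omega
  rw [e]
  exact ⟨hd1, by nlinarith, by nlinarith⟩

/-- For two entries of a contained sub-matrix (one lying entirely in
a single `T × T` row-major block) that are consecutive in the row-major traversal
of the sub-matrix, the absolute difference of their Morton-hybrid linear indices
is at least 1 and at most `T·(T-1)+1 ≤ T²`. -/
theorem contained_consecutive_address_jump (m t : ℕ) (ht : t ≤ m)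
    (T : ℕ) (hT : T = 2 ^ t) (i0 j0 r c : ℕ) (hr : 0 < r) (hc : 0 < c)
    (hbound : i0 + r ≤ 2 ^ m ∧ j0 + c ≤ 2 ^ m)
    (hcontained : ∃ k1 k2 : ℕ,
      k1 * T ≤ i0 ∧ i0 + r ≤ k1 * T + T ∧ k2 * T ≤ j0 ∧ j0 + c ≤ k2 * T + T)
    (i j i' j' : ℕ)
    (hin : i0 ≤ i ∧ i < i0 + r ∧ j0 ≤ j ∧ j < j0 + c)
    (hin' : i0 ≤ i' ∧ i' < i0 + r ∧ j0 ≤ j' ∧ j' < j0 + c)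
    (hconsec : (i' = i ∧ j' = j + 1) ∨ (i' = i + 1 ∧ j = j0 + c - 1 ∧ j' = j0)) :
    1 ≤ max (mhAddr m t i j) (mhAddr m t i' j') -
          min (mhAddr m t i j) (mhAddr m t i' j') ∧
    max (mhAddr m t i j) (mhAddr m t i' j') -
          min (mhAddr m t i j) (mhAddr m t i' j') ≤ T * (T - 1) + 1 ∧
    T * (T - 1) + 1 ≤ T ^ 2 := by
  obtain ⟨k1, k2, h1, h2, h3, h4⟩ := hcontained
  subst hT
  have hpos : 0 < 2 ^ t := Nat.pow_pos (by norm_num)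
  obtain ⟨hi1, hi2, hj1, hj2⟩ := hin
  obtain ⟨hi1', hi2', hj1', hj2'⟩ := hin'
  have hcP : c ≤ 2 ^ t := by linarith
  have Hi := blockDivMod (k := k1) (x := i) (h1.trans hi1) (lt_of_lt_of_le hi2 h2)
  have Hj := blockDivMod (k := k2) (x := j) (h3.trans hj1) (lt_of_lt_of_le hj2 h4)
  have Ai : mhAddr m t i j =
      (2 ^ t) ^ 2 * mortonIndex (m - t) k1 k2 + (i - k1 * 2 ^ t) * 2 ^ t
        + (j - k2 * 2 ^ t) := by
    rw [mhAddr, Hi.1, Hj.1, Hi.2, Hj.2]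
  rcases hconsec with ⟨h5, h6⟩ | ⟨h5, h6, h7⟩
  · -- same row, next column
    rw [h5] at hi1' hi2'
    rw [h6] at hj1' hj2'
    rw [h5, h6]
    have Hj' := blockDivMod (k := k2) (x := j + 1)
      (le_trans (h3.trans hj1) (Nat.le_succ _)) (lt_of_lt_of_le hj2' h4)
    have Ai' : mhAddr m t i (j + 1) =
        (2 ^ t) ^ 2 * mortonIndex (m - t) k1 k2 + (i - k1 * 2 ^ t) * 2 ^ t
          + (j + 1 - k2 * 2 ^ t) := by
      rw [mhAddr, Hi.1, Hj'.1, Hi.2, Hj'.2]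
    have e : j + 1 - k2 * 2 ^ t = (j - k2 * 2 ^ t) + 1 := by
      have hX : k2 * 2 ^ t ≤ j := h3.trans hj1
      revert hX
      generalize k2 * 2 ^ t = X
      intro hX
      omega
    have key : mhAddr m t i (j + 1) = mhAddr m t i j + 1 := by
      rw [Ai, Ai', e]; ring
    rw [key]
    exact finalStep _ 1 _ hpos le_rfl hpos
  · -- next row, wrap to first column
    rw [h5] at hi1' hi2'
    rw [h7] at hj1' hj2'
    rw [h6] at hj1 hj2 Hj Ai
    rw [h5, h6, h7]
    have Hi' := blockDivMod (k := k1) (x := i + 1)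
      (le_trans (h1.trans hi1) (Nat.le_succ _)) (lt_of_lt_of_le hi2' h2)
    have Hj0 := blockDivMod (k := k2) (x := j0) h3 (by linarith)
    have Ai' : mhAddr m t (i + 1) j0 =
        (2 ^ t) ^ 2 * mortonIndex (m - t) k1 k2 + (i + 1 - k1 * 2 ^ t) * 2 ^ t
          + (j0 - k2 * 2 ^ t) := by
      rw [mhAddr, Hi'.1, Hj0.1, Hi'.2, Hj0.2]
    have e1 : i + 1 - k1 * 2 ^ t = (i - k1 * 2 ^ t) + 1 := by
      have hX : k1 * 2 ^ t ≤ i := h1.trans hi1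
      revert hX
      generalize k1 * 2 ^ t = X
      intro hX
      omega
    have key : mhAddr m t (i + 1) j0 + c = mhAddr m t i (j0 + c - 1) + 2 ^ t + 1 := by
      rw [Ai, Ai', e1, add_mul, one_mul]
      revert h3 hc
      generalize (2 ^ t) ^ 2 * mortonIndex (m - t) k1 k2 = C
      generalize (i - k1 * 2 ^ t) * 2 ^ t = Z
      generalize k2 * 2 ^ t = Y
      generalize 2 ^ t = P
      intro h3 hc
      omega
    have hkey : mhAddr m t (i + 1) j0 =
        mhAddr m t i (j0 + c - 1) + (2 ^ t + 1 - c) := by omega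
    rw [hkey]
    exact finalStep _ _ _ hpos (by omega) (by omega)
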